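/- For every natural number p, the function f : ℝ → ℝ defined by f(v) = exp(−v²/4)·He_p(v) satisfies f″(v) + (1/2 − v²/4)·f(v) = −p·f(v) for all real v. In other words, f is an eigenfunction with eigenvalue −p of the operator f ↦ f″ + (1/2 − v²/4)f. -/

import Mathlib

open Polynomial

lemma hermite_deriv_succ' (n : ℕ) :
    derivative (hermite (n + 1)) = (n + 1 : ℤ[X]) * hermite n := by
  induction n with
  | zero => simp [hermite_one, hermite_zero]
  | succ n ih =>
    rw [hermite_succ (n+1), derivative_sub, derivative_mul, ih, derivative_mul,
      show derivative (hermite n) = X * hermite n - hermite (n+1) by rw [hermite_succ]; ring]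
    simp only [derivative_X, derivative_add, derivative_natCast, derivative_one]
    push_cast
    ring

lemma hermite_ode' (p : ℕ) :
    derivative (derivative (hermite p)) =
      X * derivative (hermite p) - (p : ℤ[X]) * hermite p := by
  cases p with
  | zero => simp
  | succ n =>
    rw [hermite_deriv_succ', derivative_mul,
      show derivative (hermite n) = X * hermite n - hermite (n+1) by rw [hermite_succ]; ring]
    simp only [derivative_add, derivative_natCast, derivative_one]
    push_cast
    ring

lemma hasDerivAt_exp_mul_eval (q : ℝ[X]) (v : ℝ) :
    HasDerivAt (fun w : ℝ => Real.exp (-w ^ 2 / 4) * eval w q)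
      (Real.exp (-v ^ 2 / 4) * eval v (derivative q - C (1/2 : ℝ) * X * q)) v := by
  have h1 : HasDerivAt (fun w : ℝ => -w ^ 2 / 4) (-v / 2) v := by
    have := ((hasDerivAt_pow 2 v).neg.div_const 4)
    refine this.congr_deriv ?_
    push_cast; ring
  have h2 := (Real.hasDerivAt_exp (-v ^ 2 / 4)).comp v h1
  have h3 := q.hasDerivAt v
  have h4 := h2.mul h3
  refine h4.congr_deriv ?_
  simp only [eval_sub, eval_mul, eval_C, eval_X, Function.comp_apply]
  ring

/-- the parabolic cylinder function `D_p(v) = exp(−v²/4)·He_p(v)` is an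
eigenfunction with eigenvalue `−p` of the operator `f ↦ f″ + (1/2 − v²/4)·f`. -/
theorem parabolic_cylinder_eigenfunction (p : ℕ) (v : ℝ) :
    deriv (deriv (fun w : ℝ => Real.exp (-w ^ 2 / 4) * aeval w (hermite p))) v +
      (1 / 2 - v ^ 2 / 4) * (Real.exp (-v ^ 2 / 4) * aeval v (hermite p)) =
    -(p : ℝ) * (Real.exp (-v ^ 2 / 4) * aeval v (hermite p)) := by
  set Q : ℝ[X] := (hermite p).map (algebraMap ℤ ℝ) with hQ
  have haev : ∀ w : ℝ, (aeval w (hermite p) : ℝ) = eval w Q := by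
    intro w; rw [aeval_def, eval₂_eq_eval_map]
  set Q₁ : ℝ[X] := derivative Q - C (1/2 : ℝ) * X * Q with hQ1
  have hfun : (fun w : ℝ => Real.exp (-w ^ 2 / 4) * aeval w (hermite p)) =
      fun w : ℝ => Real.exp (-w ^ 2 / 4) * eval w Q := by
    funext w; rw [haev]
  have hd1 : deriv (fun w : ℝ => Real.exp (-w ^ 2 / 4) * aeval w (hermite p)) =
      fun w : ℝ => Real.exp (-w ^ 2 / 4) * eval w Q₁ := by
    rw [hfun]
    funext w
    exact (hasDerivAt_exp_mul_eval Q w).deriv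
  have hd2 : deriv (deriv (fun w : ℝ => Real.exp (-w ^ 2 / 4) * aeval w (hermite p))) v =
      Real.exp (-v ^ 2 / 4) * eval v (derivative Q₁ - C (1/2 : ℝ) * X * Q₁) := by
    rw [hd1]
    exact (hasDerivAt_exp_mul_eval Q₁ v).deriv
  rw [hd2, haev]
  -- ODE for Q
  have haev2 : ∀ r : ℤ[X], eval v (r.map (algebraMap ℤ ℝ)) = aeval v r := fun r => by
    rw [eval_map, aeval_def]
  have hODE : eval v (derivative (derivative Q)) =
      v * eval v (derivative Q) - (p : ℝ) * eval v Q := by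
    rw [hQ, derivative_map, derivative_map, haev2, haev2, haev2, hermite_ode' p]
    simp [map_sub]
  rw [hQ1]
  simp only [derivative_sub, derivative_mul, derivative_C, derivative_X, eval_sub, eval_mul,
    eval_C, eval_X, eval_add, eval_one, eval_zero, zero_mul, one_mul, mul_one]
  rw [hODE]
  ring
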